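/- Let P(x) = Σ_{k=1}^N c_k e^{2πi x·y_k} with distinct y_k, h(x) = Σ_{k=1}^N |c_k|² e^{2πi x·y_k}, and let (A_n) be a van Hove sequence. Then (1/vol(A_n)) (1_{A_n}P) ∗ reflect(conj(1_{A_n}P)) converges to h uniformly on compact subsets of ℝ^d, where reflect(g)(x) = g(−x). -/

import Mathlib

open MeasureTheory Filter
open scoped Pointwise RealInnerProductSpace

section Helpers

variable {d : ℕ}

/-- The character `t ↦ e^{2πi⟨w,t⟩}`. -/
noncomputable def ew (w t : EuclideanSpace ℝ (Fin d)) : ℂ :=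
  Complex.exp (2 * Real.pi * Complex.I * ((⟪w, t⟫ : ℝ) : ℂ))

lemma norm_ew (w t : EuclideanSpace ℝ (Fin d)) : ‖ew w t‖ = 1 := by
  simp [ew, Complex.norm_exp]

lemma ew_add (w s t : EuclideanSpace ℝ (Fin d)) : ew w (s + t) = ew w s * ew w t := by
  simp only [ew, inner_add_right, Complex.ofReal_add, ← Complex.exp_add]
  ring_nf

lemma ew_zero (t : EuclideanSpace ℝ (Fin d)) : ew 0 t = 1 := by
  simp [ew]

lemma ew_neg (w t : EuclideanSpace ℝ (Fin d)) : ew w (-t) = ew (-w) t := by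
  simp [ew, inner_neg_right, inner_neg_left]

lemma conj_ew (w t : EuclideanSpace ℝ (Fin d)) :
    (starRingEnd ℂ) (ew w t) = ew w (-t) := by
  rw [ew, ← Complex.exp_conj]
  simp only [ew, inner_neg_right, map_mul, Complex.conj_I, Complex.conj_ofReal,
    Complex.ofReal_neg, map_ofNat]
  ring_nf

lemma ew_left_add (w w' t : EuclideanSpace ℝ (Fin d)) :
    ew (w + w') t = ew w t * ew w' t := by
  simp only [ew, inner_add_left, Complex.ofReal_add, ← Complex.exp_add]
  ring_nf

lemma continuous_ew (w : EuclideanSpace ℝ (Fin d)) : Continuous (ew w) :=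
  Complex.continuous_exp.comp <| (continuous_const).mul <|
    Complex.continuous_ofReal.comp (continuous_const.inner continuous_id)

lemma meas_lt_top {S : Set (EuclideanSpace ℝ (Fin d))} (h : Bornology.IsBounded S) :
    volume S < ⊤ :=
  lt_of_le_of_lt (measure_mono subset_closure) h.isCompact_closure.measure_lt_top

lemma integrableOn_ew {S : Set (EuclideanSpace ℝ (Fin d))}
    (hb : Bornology.IsBounded S) (w : EuclideanSpace ℝ (Fin d)) :
    IntegrableOn (ew w) S := by
  refine Measure.integrableOn_of_bounded (M := 1) (meas_lt_top hb).ne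
    ((continuous_ew w).aestronglyMeasurable) ?_
  filter_upwards with x using (norm_ew w x).le

lemma norm_intS (w : EuclideanSpace ℝ (Fin d)) {X : Set (EuclideanSpace ℝ (Fin d))}
    (hX : Bornology.IsBounded X) : ‖∫ s in X, ew w s‖ ≤ (volume X).toReal := by
  have := norm_setIntegral_le_of_norm_le_const_ae (μ := volume) (C := 1) (s := X)
    (f := ew w) (meas_lt_top hX) (by filter_upwards with x using (norm_ew w x).le)
  simpa [measureReal_def] using this

lemma int_diff (w : EuclideanSpace ℝ (Fin d)) {S T : Set (EuclideanSpace ℝ (Fin d))}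
    (hSm : MeasurableSet S) (hTm : MeasurableSet T)
    (hSb : Bornology.IsBounded S) (hTb : Bornology.IsBounded T) :
    ‖(∫ s in S, ew w s) - ∫ s in T, ew w s‖ ≤
      (volume (S \ T)).toReal + (volume (T \ S)).toReal := by
  have hS := setIntegral_union (f := ew w) (μ := volume) (s := S ∩ T) (t := S \ T)
    (disjoint_sdiff_self_right.mono_left Set.inter_subset_right) (hSm.diff hTm)
    ((integrableOn_ew hSb w).mono_set Set.inter_subset_left)
    ((integrableOn_ew hSb w).mono_set Set.diff_subset)
  rw [Set.inter_union_diff] at hS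
  have hT := setIntegral_union (f := ew w) (μ := volume) (s := T ∩ S) (t := T \ S)
    (disjoint_sdiff_self_right.mono_left Set.inter_subset_right) (hTm.diff hSm)
    ((integrableOn_ew hTb w).mono_set Set.inter_subset_left)
    ((integrableOn_ew hTb w).mono_set Set.diff_subset)
  rw [Set.inter_union_diff] at hT
  rw [hS, hT, Set.inter_comm T S]
  have h1 := norm_intS w (hSb.subset Set.diff_subset : Bornology.IsBounded (S \ T))
  have h2 := norm_intS w (hTb.subset Set.diff_subset : Bornology.IsBounded (T \ S))
  calc ‖(∫ s in S ∩ T, ew w s) + (∫ s in S \ T, ew w s)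
        - ((∫ s in S ∩ T, ew w s) + ∫ s in T \ S, ew w s)‖
      = ‖(∫ s in S \ T, ew w s) - ∫ s in T \ S, ew w s‖ := by ring_nf
    _ ≤ _ := (norm_sub_le _ _).trans (add_le_add h1 h2)

lemma int_translate (w v : EuclideanSpace ℝ (Fin d)) {S : Set (EuclideanSpace ℝ (Fin d))}
    (hSm : MeasurableSet S) :
    (∫ s in (fun x => x - v) ⁻¹' S, ew w s) = ew w v * ∫ s in S, ew w s := by
  have hm : MeasurableSet ((fun x => x - v) ⁻¹' S) := hSm.preimage (measurable_id.sub_const v)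
  rw [← integral_indicator hm, ← integral_add_left_eq_self
    (fun s => ((fun x => x - v) ⁻¹' S).indicator (ew w) s) v]
  have : ∀ s, ((fun x => x - v) ⁻¹' S).indicator (ew w) (v + s)
      = S.indicator (fun s => ew w v * ew w s) s := by
    intro s
    by_cases hs : s ∈ S
    · rw [Set.indicator_of_mem (by simp [hs]), Set.indicator_of_mem hs, ← ew_add, add_comm]
    · rw [Set.indicator_of_notMem (by simp [hs]), Set.indicator_of_notMem hs]
  simp_rw [this]
  rw [integral_indicator hSm, integral_const_mul]

/-- Translation of a set, as a preimage: `Tv v S = v + S`. -/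
def Tv (v : EuclideanSpace ℝ (Fin d)) (S : Set (EuclideanSpace ℝ (Fin d))) :
    Set (EuclideanSpace ℝ (Fin d)) := (fun x => x - v) ⁻¹' S

lemma Tv_meas {v : EuclideanSpace ℝ (Fin d)} {S : Set (EuclideanSpace ℝ (Fin d))}
    (hS : MeasurableSet S) : MeasurableSet (Tv v S) :=
  hS.preimage (measurable_id.sub_const v)

lemma Tv_bdd {v : EuclideanSpace ℝ (Fin d)} {S : Set (EuclideanSpace ℝ (Fin d))}
    (hS : Bornology.IsBounded S) : Bornology.IsBounded (Tv v S) := by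
  have : Tv v S ⊆ S + {v} := by
    intro x hx
    exact ⟨x - v, hx, v, rfl, by module⟩
  exact (hS.add Bornology.isBounded_singleton).subset this

/-- The auxiliary translation vector associated to a frequency `w`. -/
noncomputable def vv (w : EuclideanSpace ℝ (Fin d)) : EuclideanSpace ℝ (Fin d) :=
  ((2 * (⟪w, w⟫ : ℝ))⁻¹) • w

lemma ew_vv {w : EuclideanSpace ℝ (Fin d)} (hw : w ≠ 0) : ew w (vv w) = -1 := by
  have h0 : (⟪w, w⟫ : ℝ) ≠ 0 := inner_self_ne_zero.mpr hw
  have : (⟪w, vv w⟫ : ℝ) = 2⁻¹ := by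
    rw [vv, real_inner_smul_right, mul_inv, mul_assoc, inv_mul_cancel₀ h0, mul_one]
  rw [ew, this]
  have : 2 * (Real.pi : ℂ) * Complex.I * ((2⁻¹ : ℝ) : ℂ) = Real.pi * Complex.I := by
    push_cast; ring
  rw [this, Complex.exp_pi_mul_I]

lemma cancel {w : EuclideanSpace ℝ (Fin d)} (hw : w ≠ 0)
    {S : Set (EuclideanSpace ℝ (Fin d))} (hSm : MeasurableSet S)
    (hSb : Bornology.IsBounded S) :
    2 * ‖∫ s in S, ew w s‖ ≤
      (volume (S \ Tv (vv w) S)).toReal + (volume (Tv (vv w) S \ S)).toReal := by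
  have ht := int_translate w (vv w) hSm
  rw [ew_vv hw] at ht
  have h2 : (∫ s in S, ew w s) - ∫ s in Tv (vv w) S, ew w s = 2 * ∫ s in S, ew w s := by
    rw [Tv, ht]; ring
  have hd := int_diff w (T := Tv (vv w) S) hSm (Tv_meas (v := vv w) hSm) hSb
    (Tv_bdd (v := vv w) hSb)
  calc 2 * ‖∫ s in S, ew w s‖ = ‖(∫ s in S, ew w s) - ∫ s in Tv (vv w) S, ew w s‖ := by
        rw [h2]; simp [norm_mul]
    _ ≤ _ := hd

/-- The van Hove boundary of `A` relative to `K`. -/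
def bdry (K A : Set (EuclideanSpace ℝ (Fin d))) : Set (EuclideanSpace ℝ (Fin d)) :=
  ((K + A) \ interior A) ∪ (((-K) + closure Aᶜ) ∩ A)

lemma sub1 {K A : Set (EuclideanSpace ℝ (Fin d))} {u : EuclideanSpace ℝ (Fin d)}
    (hu : u ∈ K) : (Tv u A) \ A ⊆ bdry K A := by
  rintro x ⟨hx1, hx2⟩
  exact Or.inl ⟨⟨u, hu, x - u, hx1, by module⟩, fun h => hx2 (interior_subset h)⟩

lemma sub2 {K A : Set (EuclideanSpace ℝ (Fin d))} {u : EuclideanSpace ℝ (Fin d)}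
    (hu : -u ∈ K) : A \ (Tv u A) ⊆ bdry K A := by
  rintro x ⟨hx1, hx2⟩
  exact Or.inr ⟨⟨u, Set.mem_neg.mpr (by simpa using hu), x - u, subset_closure hx2, by module⟩,
    hx1⟩

lemma bdry_bdd {K A : Set (EuclideanSpace ℝ (Fin d))} (hK : Bornology.IsBounded K)
    (hA : Bornology.IsBounded A) : Bornology.IsBounded (bdry K A) := by
  refine ((hK.add hA).union hA).subset ?_
  rintro x (⟨h1, -⟩ | ⟨-, h2⟩)
  · exact Or.inl h1
  · exact Or.inr h2

lemma keyterm (wk wl s u : EuclideanSpace ℝ (Fin d)) :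
    ew wk s * (starRingEnd ℂ) (ew wl (s - u)) = ew wl u * ew (wk - wl) s := by
  rw [conj_ew, show -(s - u) = u + -s by module, ew_add, ew_neg,
    show wk - wl = wk + -wl by module, ew_left_add]
  ring

lemma expand (N : ℕ) (c : Fin N → ℂ) (y : Fin N → EuclideanSpace ℝ (Fin d))
    {A : Set (EuclideanSpace ℝ (Fin d))} (hAm : MeasurableSet A)
    (hAb : Bornology.IsBounded A) (u : EuclideanSpace ℝ (Fin d)) :
    (∫ s, A.indicator (fun t => ∑ k, c k * ew (y k) t) s *
        (starRingEnd ℂ) (A.indicator (fun t => ∑ k, c k * ew (y k) t) (s - u)))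
      = ∑ k, ∑ l, (c k * (starRingEnd ℂ) (c l) * ew (y l) u) *
          ∫ s in A ∩ Tv u A, ew (y k - y l) s := by
  set S := A ∩ Tv u A with hS
  have hSm : MeasurableSet S := hAm.inter (Tv_meas hAm)
  have hint : ∀ w, Integrable (S.indicator (ew w)) :=
    fun w => (integrable_indicator_iff hSm).mpr ((integrableOn_ew hAb w).mono_set
      Set.inter_subset_left)
  have hpt : ∀ s, A.indicator (fun t => ∑ k, c k * ew (y k) t) s *
      (starRingEnd ℂ) (A.indicator (fun t => ∑ k, c k * ew (y k) t) (s - u))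
      = ∑ k, ∑ l, (c k * (starRingEnd ℂ) (c l) * ew (y l) u) *
          S.indicator (ew (y k - y l)) s := by
    intro s
    by_cases hsA : s ∈ A
    · by_cases hsu : s - u ∈ A
      · have hsS : s ∈ S := ⟨hsA, hsu⟩
        rw [Set.indicator_of_mem hsA, Set.indicator_of_mem hsu]
        simp only [Set.indicator_of_mem hsS]
        rw [map_sum, Finset.sum_mul_sum]
        refine Finset.sum_congr rfl fun k _ => Finset.sum_congr rfl fun l _ => ?_
        rw [map_mul]
        calc c k * ew (y k) s * ((starRingEnd ℂ) (c l) * (starRingEnd ℂ) (ew (y l) (s - u))) =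
            c k * (starRingEnd ℂ) (c l) * (ew (y k) s * (starRingEnd ℂ) (ew (y l) (s - u))) := by
              ring
          _ = _ := by rw [keyterm]; ring
      · have hsS : s ∉ S := fun h => hsu h.2
        rw [Set.indicator_of_notMem hsu, map_zero, mul_zero]
        symm
        refine Finset.sum_eq_zero fun k _ => Finset.sum_eq_zero fun l _ => ?_
        rw [Set.indicator_of_notMem hsS, mul_zero]
    · have hsS : s ∉ S := fun h => hsA h.1
      rw [Set.indicator_of_notMem hsA, zero_mul]
      symm
      refine Finset.sum_eq_zero fun k _ => Finset.sum_eq_zero fun l _ => ?_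
      rw [Set.indicator_of_notMem hsS, mul_zero]
  rw [integral_congr_ae (Filter.Eventually.of_forall hpt)]
  rw [integral_finset_sum _ (fun k _ => integrable_finset_sum _
    (fun l _ => (hint (y k - y l)).const_mul _))]
  refine Finset.sum_congr rfl fun k _ => ?_
  rw [integral_finset_sum _ (fun l _ => (hint (y k - y l)).const_mul _)]
  refine Finset.sum_congr rfl fun l _ => ?_
  rw [integral_const_mul, integral_indicator hSm]

end Helpers

/-- For a trigonometric polynomial `P` with distinct frequencies and a van Hove sequence
`(A n)`, the normalized convolutions `(1/vol(A n)) (1_{A n}P) ∗ reflect(conj(1_{A n}P))`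
converge to `h(u) = Σ_k |c_k|² e^{2πi u·y_k}` uniformly on compact subsets of `ℝ^d`. -/
theorem trig_polynomial_doubly_restricted_convergence (d N : ℕ) (c : Fin N → ℂ)
    (y : Fin N → EuclideanSpace ℝ (Fin d)) (hy : Function.Injective y)
    (A : ℕ → Set (EuclideanSpace ℝ (Fin d)))
    (hbdd : ∀ n, Bornology.IsBounded (A n))
    (hmeas : ∀ n, MeasurableSet (A n))
    (hpos : ∀ n, 0 < volume (A n))
    (hvH : ∀ K : Set (EuclideanSpace ℝ (Fin d)), IsCompact K →
      Tendsto (fun n =>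
          volume (((K + A n) \ interior (A n)) ∪ (((-K) + closure ((A n)ᶜ)) ∩ A n)) /
            volume (A n))
        atTop (nhds 0)) :
    ∀ K : Set (EuclideanSpace ℝ (Fin d)), IsCompact K →
      TendstoUniformlyOn (fun n (u : EuclideanSpace ℝ (Fin d)) =>
          (((volume (A n)).toReal⁻¹ : ℝ) : ℂ) *
            ∫ s,
              (A n).indicator (fun t =>
                ∑ k, c k * Complex.exp (2 * Real.pi * Complex.I * ((⟪y k, t⟫ : ℝ) : ℂ))) s *
                (starRingEnd ℂ)
                  ((A n).indicator (fun t =>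
                    ∑ k, c k *
                      Complex.exp (2 * Real.pi * Complex.I * ((⟪y k, t⟫ : ℝ) : ℂ))) (s - u)))
        (fun u => ∑ k, ((‖c k‖ ^ 2 : ℝ) : ℂ) *
          Complex.exp (2 * Real.pi * Complex.I * ((⟪y k, u⟫ : ℝ) : ℂ)))
        atTop K := by
  classical
  intro K hK
  -- the enlarged compact set
  set vS : Set (EuclideanSpace ℝ (Fin d)) :=
    Set.range (fun p : Fin N × Fin N => vv (y p.1 - y p.2)) with hvSdef
  set L : Set (EuclideanSpace ℝ (Fin d)) := K ∪ vS with hLdef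
  have hL : IsCompact L := hK.union (Set.finite_range _).isCompact
  set K' : Set (EuclideanSpace ℝ (Fin d)) := L ∪ (-L) with hK'def
  have hK' : IsCompact K' := hL.union hL.neg
  -- the error sequence
  set ε : ℕ → ℝ := fun n => (volume (bdry K' (A n)) / volume (A n)).toReal with hεdef
  have hε : Tendsto ε atTop (nhds 0) := by
    have h0 := (ENNReal.tendsto_toReal (a := 0) (by simp)).comp (hvH K' hK')
    rw [ENNReal.toReal_zero] at h0
    exact h0
  have hεnn : ∀ n, 0 ≤ ε n := fun n => ENNReal.toReal_nonneg
  set C : ℝ := 2 * ((∑ k, ‖c k‖) * (∑ k, ‖c k‖)) with hCdef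
  have hCnn : 0 ≤ C := by positivity
  -- the key uniform estimate
  have key : ∀ n, ∀ u ∈ K,
      ‖(∑ k, ((‖c k‖ ^ 2 : ℝ) : ℂ) * ew (y k) u) -
        (((volume (A n)).toReal⁻¹ : ℝ) : ℂ) *
          ∫ s, (A n).indicator (fun t => ∑ k, c k * ew (y k) t) s *
            (starRingEnd ℂ) ((A n).indicator (fun t => ∑ k, c k * ew (y k) t) (s - u))‖
        ≤ C * ε n := by
    intro n u hu
    set a : ℝ := (volume (A n)).toReal with hadef
    have ha : 0 < a := ENNReal.toReal_pos (hpos n).ne' (meas_lt_top (hbdd n)).ne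
    set S : Set (EuclideanSpace ℝ (Fin d)) := A n ∩ Tv u (A n) with hSdef
    have hSm : MeasurableSet S := (hmeas n).inter (Tv_meas (hmeas n))
    have hSb : Bornology.IsBounded S := (hbdd n).subset Set.inter_subset_left
    set volB : ℝ := (volume (bdry K' (A n))).toReal with hvolBdef
    have hBfin : volume (bdry K' (A n)) ≠ ⊤ :=
      (meas_lt_top (bdry_bdd hK'.isBounded (hbdd n))).ne
    have hεn : ε n = volB / a := by
      show (volume (bdry K' (A n)) / volume (A n)).toReal = volB / a
      rw [ENNReal.toReal_div]
    have huK' : -u ∈ K' :=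
      Set.mem_union_right _ (Set.neg_mem_neg.mpr (Set.mem_union_left _ hu))
    -- bound for A \ S
    have hd1 : (volume ((A n) \ S)).toReal ≤ volB := by
      rw [hSdef, Set.diff_self_inter]
      exact ENNReal.toReal_mono hBfin (measure_mono (sub2 huK'))
    -- the per-pair estimate
    have hterm : ∀ k l : Fin N,
        ‖(if k = l then (1 : ℂ) else 0) - (((a⁻¹ : ℝ)) : ℂ) * ∫ s in S, ew (y k - y l) s‖
          ≤ 2 * ε n := by
      intro k l
      by_cases hkl : k = l
      · subst hkl
        rw [sub_self, if_pos rfl]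
        have hI : (∫ s in S, ew (0 : EuclideanSpace ℝ (Fin d)) s)
            = (((volume S).toReal : ℝ) : ℂ) := by
          simp_rw [ew_zero]
          simp [Measure.restrict_apply hSm, measureReal_def]
        rw [hI]
        set vs : ℝ := (volume S).toReal with hvsdef
        have hvs1 : vs ≤ a := ENNReal.toReal_mono (meas_lt_top (hbdd n)).ne
          (measure_mono Set.inter_subset_left)
        have hvs0 : 0 ≤ vs := ENNReal.toReal_nonneg
        have hdiff : (volume ((A n) \ S)).toReal = a - vs := by
          rw [measure_diff Set.inter_subset_left hSm.nullMeasurableSet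
            (lt_of_le_of_lt (measure_mono Set.inter_subset_left) (meas_lt_top (hbdd n))).ne,
            ENNReal.toReal_sub_of_le (measure_mono Set.inter_subset_left)
            (meas_lt_top (hbdd n)).ne]
        have h1 : ((1 : ℂ) - ((a⁻¹ : ℝ) : ℂ) * ((vs : ℝ) : ℂ)) = (((1 - a⁻¹ * vs : ℝ)) : ℂ) := by
          push_cast; ring
        rw [h1, Complex.norm_real, Real.norm_eq_abs,
          abs_of_nonneg (by
            have : a⁻¹ * vs ≤ 1 := by
              rw [inv_mul_le_iff₀ ha]; linarith
            linarith)]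
        have h2 : 1 - a⁻¹ * vs = a⁻¹ * (a - vs) := by field_simp
        rw [h2, ← hdiff]
        calc a⁻¹ * (volume ((A n) \ S)).toReal ≤ a⁻¹ * volB := by
              apply mul_le_mul_of_nonneg_left hd1 (by positivity)
          _ = ε n := by rw [hεn, div_eq_mul_inv]; ring
          _ ≤ 2 * ε n := by linarith [hεnn n]
      · -- off-diagonal
        have hw : y k - y l ≠ 0 := sub_ne_zero.mpr (fun h => hkl (hy h))
        set w := y k - y l with hwdef
        have hvvS : vv w ∈ vS := Set.mem_range.mpr ⟨(k, l), by rw [hwdef]⟩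
        have hvvLmem : vv w ∈ L := Set.mem_union_right _ hvvS
        have hvvL : vv w ∈ K' := Set.mem_union_left _ hvvLmem
        have hvvL' : -(vv w) ∈ K' :=
          Set.mem_union_right _ (Set.neg_mem_neg.mpr hvvLmem)
        have hc := cancel hw (hmeas n) (hbdd n)
        have hb1 : (volume ((A n) \ Tv (vv w) (A n))).toReal ≤ volB :=
          ENNReal.toReal_mono hBfin (measure_mono (sub2 hvvL'))
        have hb2 : (volume (Tv (vv w) (A n) \ (A n))).toReal ≤ volB :=
          ENNReal.toReal_mono hBfin (measure_mono (sub1 hvvL))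
        have hIA : ‖∫ s in A n, ew w s‖ ≤ volB := by linarith
        have hdiff := int_diff w (hmeas n) hSm (hbdd n) hSb
        have hSA : volume (S \ A n) = 0 := by
          rw [Set.diff_eq_empty.mpr Set.inter_subset_left, measure_empty]
        rw [hSA] at hdiff
        simp only [ENNReal.toReal_zero, add_zero] at hdiff
        have hIS : ‖∫ s in S, ew w s‖ ≤ 2 * volB := by
          have : (∫ s in S, ew w s)
              = (∫ s in A n, ew w s) - ((∫ s in A n, ew w s) - ∫ s in S, ew w s) := by ring
          rw [this]
          exact (norm_sub_le _ _).trans (by linarith)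
        simp only [if_neg hkl, zero_sub, norm_neg, norm_mul, Complex.norm_real,
          Real.norm_eq_abs, abs_of_nonneg (inv_nonneg.mpr ha.le)]
        calc a⁻¹ * ‖∫ s in S, ew w s‖ ≤ a⁻¹ * (2 * volB) :=
              mul_le_mul_of_nonneg_left hIS (by positivity)
          _ = 2 * ε n := by rw [hεn, div_eq_mul_inv]; ring
    -- assemble
    rw [expand N c y (hmeas n) (hbdd n) u]
    have hh : (∑ k, ((‖c k‖ ^ 2 : ℝ) : ℂ) * ew (y k) u)
        = ∑ k, ∑ l, (c k * (starRingEnd ℂ) (c l) * ew (y l) u) * (if k = l then 1 else 0) := by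
      refine Finset.sum_congr rfl fun k _ => ?_
      rw [Finset.sum_eq_single k (fun l _ hlk => by rw [if_neg (Ne.symm hlk), mul_zero])
        (fun h => absurd (Finset.mem_univ k) h)]
      rw [if_pos rfl, mul_one, Complex.mul_conj]
      simp [Complex.normSq_eq_norm_sq]
    rw [hh]
    have hsplit : (∑ k, ∑ l, (c k * (starRingEnd ℂ) (c l) * ew (y l) u) * (if k = l then 1 else 0))
        - (((a⁻¹ : ℝ)) : ℂ) * ∑ k, ∑ l, (c k * (starRingEnd ℂ) (c l) * ew (y l) u) *
            ∫ s in A n ∩ Tv u (A n), ew (y k - y l) s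
        = ∑ k, ∑ l, (c k * (starRingEnd ℂ) (c l) * ew (y l) u) *
            ((if k = l then 1 else 0) - (((a⁻¹ : ℝ)) : ℂ) * ∫ s in S, ew (y k - y l) s) := by
      rw [Finset.mul_sum, ← Finset.sum_sub_distrib]
      refine Finset.sum_congr rfl fun k _ => ?_
      rw [Finset.mul_sum, ← Finset.sum_sub_distrib]
      refine Finset.sum_congr rfl fun l _ => ?_
      rw [hSdef]; ring
    rw [hsplit]
    calc ‖∑ k, ∑ l, (c k * (starRingEnd ℂ) (c l) * ew (y l) u) *
            ((if k = l then 1 else 0) - (((a⁻¹ : ℝ)) : ℂ) * ∫ s in S, ew (y k - y l) s)‖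
        ≤ ∑ k, ∑ l, ‖(c k * (starRingEnd ℂ) (c l) * ew (y l) u) *
            ((if k = l then 1 else 0) - (((a⁻¹ : ℝ)) : ℂ) * ∫ s in S, ew (y k - y l) s)‖ :=
          (norm_sum_le _ _).trans (Finset.sum_le_sum fun k _ => norm_sum_le _ _)
      _ ≤ ∑ k, ∑ l, ‖c k‖ * ‖c l‖ * (2 * ε n) := by
          refine Finset.sum_le_sum fun k _ => Finset.sum_le_sum fun l _ => ?_
          rw [norm_mul, norm_mul, norm_mul, norm_ew, mul_one, RCLike.norm_conj]
          exact mul_le_mul_of_nonneg_left (hterm k l) (by positivity)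
      _ = C * ε n := by
          simp_rw [← Finset.sum_mul]
          rw [← Finset.sum_mul_sum]
          rw [hCdef]; ring
  -- conclude uniform convergence
  rw [Metric.tendstoUniformlyOn_iff]
  intro δ hδ
  have hCε : Tendsto (fun n => C * ε n) atTop (nhds 0) := by
    have h := hε.const_mul C
    rwa [mul_zero] at h
  filter_upwards [hCε.eventually_lt_const hδ] with n hn u hu
  rw [dist_eq_norm]
  exact lt_of_le_of_lt (key n u hu) hn
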